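/- arXiv:1705.07017 — 2 statements merged into one kernel-verified Lean document; each statement's English description precedes it below -/
import Mathlib

section
/- Let Γ be a countable group acting continuously and topologically amenably on a compact Hausdorff space X, and let Δ ⊆ Γ be a subgroup. Then the restricted action of Δ on X is topologically amenable. In particular, the stabilizer in Γ of any point of X is an amenable group. -/
noncomputable section
open Filter Topology

/-- A probability measure on a countable set, seen as a nonnegative ℓ¹-function summing to 1. -/
def IsProbFn {K : Type*} (μ : K → ℝ) : Prop := (∀ k, 0 ≤ μ k) ∧ HasSum μ 1

/-- ℓ¹-distance between two measures on a countable set. -/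
def l1dist {K : Type*} (μ ν : K → ℝ) : ℝ := ∑' k, |μ k - ν k|

/-- Pushforward of a measure under the action of a group element. -/
def pushAct {Γ K : Type*} [Group Γ] [MulAction Γ K] (γ : Γ) (μ : K → ℝ) : K → ℝ :=
  fun k => μ (γ⁻¹ • k)

/-- Topological amenability of an action. -/
def TopAmenableAction (Γ X : Type*) [Group Γ] [TopologicalSpace X] [MulAction Γ X] : Prop :=
  ∃ μ : ℕ → X → Γ → ℝ,
    (∀ n x, IsProbFn (μ n x)) ∧
    (∀ n γ, Continuous fun x => μ n x γ) ∧
    ∀ γ : Γ, Tendsto (fun n => ⨆ x : X, l1dist (μ n (γ • x)) (pushAct γ (μ n x)))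
      atTop (𝓝 0)

/-- Amenability of a countable group via a Reiter sequence. -/
def ReiterAmenable (Γ : Type*) [Group Γ] : Prop :=
  ∃ ν : ℕ → Γ → ℝ, (∀ n, IsProbFn (ν n)) ∧
    ∀ γ : Γ, Tendsto (fun n => l1dist (pushAct γ (ν n)) (ν n)) atTop (𝓝 0)

lemma IsProbFn.summable' {K : Type*} {μ : K → ℝ} (h : IsProbFn μ) : Summable μ := ⟨1, h.2⟩

lemma l1dist_nonneg' {K : Type*} {μ ν : K → ℝ} : 0 ≤ l1dist μ ν :=
  tsum_nonneg fun _ => abs_nonneg _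

lemma l1dist_comm' {K : Type*} (μ ν : K → ℝ) : l1dist μ ν = l1dist ν μ :=
  tsum_congr fun k => abs_sub_comm _ _

lemma l1dist_le_two {K : Type*} {μ ν : K → ℝ} (hμ : IsProbFn μ) (hν : IsProbFn ν) :
    l1dist μ ν ≤ 2 := by
  have hb : ∀ k, |μ k - ν k| ≤ μ k + ν k := by
    intro k
    calc |μ k - ν k| ≤ |μ k| + |ν k| := abs_sub _ _
    _ = μ k + ν k := by rw [abs_of_nonneg (hμ.1 k), abs_of_nonneg (hν.1 k)]
  have hsum : HasSum (fun k => μ k + ν k) 2 := by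
    have h2 := hμ.2.add hν.2; norm_num at h2; exact h2
  calc l1dist μ ν ≤ ∑' k, (μ k + ν k) :=
        Summable.tsum_le_tsum hb ((hμ.summable'.sub hν.summable').abs) hsum.summable
  _ = 2 := hsum.tsum_eq

lemma isProbFn_pushAct {Γ K : Type*} [Group Γ] [MulAction Γ K] (γ : Γ) {μ : K → ℝ}
    (h : IsProbFn μ) : IsProbFn (pushAct γ μ) := by
  refine ⟨fun k => h.1 _, ?_⟩
  have := ((MulAction.toPerm (γ⁻¹ : Γ) : Equiv.Perm K).hasSum_iff (f := μ) (a := 1)).mpr h.2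
  exact this

/-- Sum of a measure over the fibers of a map. -/
def fiberSum {A B : Type*} (q : A → B) (g : A → ℝ) (b : B) : ℝ := ∑' a : q ⁻¹' {b}, g a

lemma hasSum_fiberSum {A B : Type*} (q : A → B) {g : A → ℝ} {a : ℝ} (hg : HasSum g a) :
    HasSum (fiberSum q g) a := hg.tsum_fiberwise q

lemma abs_fiberSum_sub_le_fiberSum_abs {A B : Type*} (q : A → B) {g h : A → ℝ}
    (hg : Summable g) (hh : Summable h) (b : B) :
    |fiberSum q g b - fiberSum q h b| ≤ fiberSum q (fun a => |g a - h a|) b := by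
  have hgs := hg.subtype (q ⁻¹' {b})
  have hhs := hh.subtype (q ⁻¹' {b})
  have hsub : fiberSum q g b - fiberSum q h b = ∑' a : q ⁻¹' {b}, (g a - h a) :=
    (hgs.tsum_sub hhs).symm
  rw [hsub]
  have habs : Summable fun a : q ⁻¹' {b} => ‖g a.1 - h a.1‖ := by
    exact ((hg.sub hh).abs).subtype (q ⁻¹' {b})
  simpa [Real.norm_eq_abs, fiberSum] using norm_tsum_le_tsum_norm habs

lemma abs_fiberSum_sub_le_l1dist {A B : Type*} (q : A → B) {g h : A → ℝ}
    (hg : Summable g) (hh : Summable h) (b : B) :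
    |fiberSum q g b - fiberSum q h b| ≤ l1dist g h := by
  refine (abs_fiberSum_sub_le_fiberSum_abs q hg hh b).trans ?_
  have hfib : HasSum (fiberSum q fun a => |g a - h a|) (l1dist g h) :=
    hasSum_fiberSum q ((hg.sub hh).abs).hasSum
  exact le_hasSum hfib b fun j _ => tsum_nonneg fun a => abs_nonneg _

lemma l1dist_fiberSum_le {A B : Type*} (q : A → B) {g h : A → ℝ}
    (hg : Summable g) (hh : Summable h) :
    l1dist (fiberSum q g) (fiberSum q h) ≤ l1dist g h := by
  have habs : Summable fun a => |g a - h a| := (hg.sub hh).abs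
  have hfib : HasSum (fiberSum q fun a => |g a - h a|) (l1dist g h) :=
    hasSum_fiberSum q habs.hasSum
  have hpt := abs_fiberSum_sub_le_fiberSum_abs q hg hh
  calc l1dist (fiberSum q g) (fiberSum q h)
      ≤ ∑' b, fiberSum q (fun a => |g a - h a|) b :=
        Summable.tsum_le_tsum hpt (Summable.of_nonneg_of_le (fun _ => abs_nonneg _) hpt hfib.summable)
          hfib.summable
  _ = l1dist g h := hfib.tsum_eq

section Retraction
variable {Γ : Type*} [Group Γ] (Δ : Subgroup Γ)

/-- A representative of the right coset `Δγ`. -/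
def rcosetRep (γ : Γ) : Γ := (Quotient.mk (QuotientGroup.rightRel Δ) γ).out

lemma rcosetRep_spec (γ : Γ) : γ * (rcosetRep Δ γ)⁻¹ ∈ Δ := by
  have := Quotient.mk_out (s := QuotientGroup.rightRel Δ) γ
  exact (QuotientGroup.rightRel_apply).mp this

/-- The retraction `Γ → Δ` along right coset representatives. -/
def retr (γ : Γ) : Δ := ⟨γ * (rcosetRep Δ γ)⁻¹, rcosetRep_spec Δ γ⟩

lemma rcosetRep_smul (δ : Δ) (γ : Γ) : rcosetRep Δ ((δ : Γ) * γ) = rcosetRep Δ γ := by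
  unfold rcosetRep
  congr 1
  apply Quotient.sound
  apply (QuotientGroup.rightRel_apply).mpr
  simpa using δ.2

lemma retr_smul (δ : Δ) (γ : Γ) : retr Δ ((δ : Γ) * γ) = δ * retr Δ γ := by
  ext
  simp [retr, rcosetRep_smul, mul_assoc]

end Retraction

lemma fiberSum_pushAct {Γ : Type*} [Group Γ] (Δ : Subgroup Γ) (δ : Δ) (g : Γ → ℝ) (d : Δ) :
    fiberSum (retr Δ) (pushAct (δ : Γ) g) d = pushAct δ (fiberSum (retr Δ) g) d := by
  have hmem : ∀ a : Γ, a ∈ retr Δ ⁻¹' {δ⁻¹ • d} ↔ (Equiv.mulLeft (δ : Γ)) a ∈ retr Δ ⁻¹' {d} := by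
    intro a
    simp only [Set.mem_preimage, Set.mem_singleton_iff, Equiv.coe_mulLeft]
    rw [retr_smul, smul_eq_mul, eq_inv_mul_iff_mul_eq]
  show ∑' a : retr Δ ⁻¹' {d}, g ((δ : Γ)⁻¹ • (a : Γ)) = ∑' a : retr Δ ⁻¹' {δ⁻¹ • d}, g a
  rw [← ((Equiv.mulLeft (δ : Γ)).subtypeEquiv hmem).tsum_eq
    (fun a : retr Δ ⁻¹' {d} => g ((δ : Γ)⁻¹ • (a : Γ)))]
  refine tsum_congr fun a => ?_
  simp [Equiv.subtypeEquiv_apply, smul_eq_mul]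

lemma eventually_l1dist_lt {X K : Type*} [TopologicalSpace X] {f : X → K → ℝ}
    (hp : ∀ x, IsProbFn (f x)) (hc : ∀ k, Continuous fun x => f x k) (x₀ : X)
    {ε : ℝ} (hε : 0 < ε) : ∀ᶠ x in 𝓝 x₀, l1dist (f x) (f x₀) < ε := by
  obtain ⟨T, hT⟩ : ∃ T : Finset K, 1 - ε / 4 < ∑ k ∈ T, f x₀ k := by
    have h1 : (1 : ℝ) - ε / 4 < 1 := by linarith
    exact ((hp x₀).2.eventually (eventually_gt_nhds h1)).exists
  have hcs : Continuous fun x => ∑ k ∈ T, f x k := continuous_finset_sum T fun k _ => hc k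
  have hca : Continuous fun x => ∑ k ∈ T, |f x k - f x₀ k| :=
    continuous_finset_sum T fun k _ => ((hc k).sub continuous_const).abs
  have h1 : ∀ᶠ x in 𝓝 x₀, 1 - ε / 2 < ∑ k ∈ T, f x k := by
    have := hcs.continuousAt (x := x₀)
    exact this.eventually (eventually_gt_nhds (by linarith))
  have h2 : ∀ᶠ x in 𝓝 x₀, ∑ k ∈ T, |f x k - f x₀ k| < ε / 4 := by
    have hz : (fun x => ∑ k ∈ T, |f x k - f x₀ k|) x₀ = 0 := by simp
    have := hca.continuousAt (x := x₀)
    rw [ContinuousAt] at this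
    simp only [sub_self, abs_zero, Finset.sum_const_zero] at this
    exact this.eventually (eventually_lt_nhds (by linarith))
  filter_upwards [h1, h2] with x hx1 hx2
  have hsx := (hp x).summable'
  have hs0 := (hp x₀).summable'
  have habs : Summable fun k => |f x k - f x₀ k| := (hsx.sub hs0).abs
  have hsplit := Summable.sum_add_tsum_compl (s := T) habs
  have htail : ∑' k : ↑(↑T : Set K)ᶜ, |f x k - f x₀ k|
      ≤ (1 - ∑ k ∈ T, f x k) + (1 - ∑ k ∈ T, f x₀ k) := by
    have hx' := Summable.sum_add_tsum_compl (s := T) hsx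
    have h0' := Summable.sum_add_tsum_compl (s := T) hs0
    rw [(hp x).2.tsum_eq] at hx'
    rw [(hp x₀).2.tsum_eq] at h0'
    have hb : ∀ k : ↑(↑T : Set K)ᶜ, |f x k - f x₀ k| ≤ f x k + f x₀ k := by
      intro k
      calc |f x k - f x₀ k| ≤ |f x k| + |f x₀ k| := abs_sub _ _
      _ = f x k + f x₀ k := by rw [abs_of_nonneg ((hp x).1 _), abs_of_nonneg ((hp x₀).1 _)]
    calc ∑' k : ↑(↑T : Set K)ᶜ, |f x k - f x₀ k|
        ≤ ∑' k : ↑(↑T : Set K)ᶜ, (f x k + f x₀ k) :=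
          Summable.tsum_le_tsum hb (habs.subtype _) ((hsx.subtype _).add (hs0.subtype _))
    _ = (∑' k : ↑(↑T : Set K)ᶜ, f x k) + ∑' k : ↑(↑T : Set K)ᶜ, f x₀ k :=
          Summable.tsum_add (hsx.subtype _) (hs0.subtype _)
    _ ≤ (1 - ∑ k ∈ T, f x k) + (1 - ∑ k ∈ T, f x₀ k) := by
          rw [← eq_sub_iff_add_eq'.mpr hx', ← eq_sub_iff_add_eq'.mpr h0']
  have : l1dist (f x) (f x₀)
      = (∑ k ∈ T, |f x k - f x₀ k|) + ∑' k : ↑(↑T : Set K)ᶜ, |f x k - f x₀ k| := hsplit.symm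
  rw [this]
  have hT' : 1 - ∑ k ∈ T, f x₀ k < ε / 4 := by linarith
  have hTx : 1 - ∑ k ∈ T, f x k < ε / 2 := by linarith
  linarith

theorem topAmenable_subgroup' {Γ X : Type*} [Group Γ] [TopologicalSpace X] [MulAction Γ X]
    (h : TopAmenableAction Γ X) (Δ : Subgroup Γ) : TopAmenableAction ↥Δ X := by
  obtain ⟨μ, hprob, hcont, hlim⟩ := h
  refine ⟨fun n x => fiberSum (retr Δ) (μ n x), ?_, ?_, ?_⟩
  · intro n x
    exact ⟨fun d => tsum_nonneg fun a => (hprob n x).1 _, hasSum_fiberSum _ (hprob n x).2⟩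
  · intro n d
    rw [continuous_iff_continuousAt]
    intro x₀
    rw [ContinuousAt, Metric.tendsto_nhds]
    intro ε hε
    filter_upwards [eventually_l1dist_lt (hprob n) (hcont n) x₀ hε] with x hx
    rw [Real.dist_eq]
    exact lt_of_le_of_lt
      (abs_fiberSum_sub_le_l1dist _ (hprob n x).summable' (hprob n x₀).summable' d) hx
  · intro δ
    refine squeeze_zero (fun n => Real.iSup_nonneg fun x => l1dist_nonneg') (fun n => ?_)
      (hlim (δ : Γ))
    refine Real.iSup_le (fun x => ?_) (Real.iSup_nonneg fun x => l1dist_nonneg')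
    have hδx : δ • x = (δ : Γ) • x := rfl
    have hkey : l1dist (fiberSum (retr Δ) (μ n (δ • x)))
        (pushAct δ (fiberSum (retr Δ) (μ n x)))
        = l1dist (fiberSum (retr Δ) (μ n ((δ : Γ) • x)))
          (fiberSum (retr Δ) (pushAct (δ : Γ) (μ n x))) := by
      rw [hδx]
      exact tsum_congr fun d => by rw [fiberSum_pushAct]
    rw [hkey]
    refine (l1dist_fiberSum_le _ (hprob n _).summable'
      (isProbFn_pushAct (δ : Γ) (hprob n x)).summable').trans ?_
    exact le_ciSup ⟨2, Set.forall_mem_range.mpr fun y =>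
      l1dist_le_two (hprob n _) (isProbFn_pushAct _ (hprob n y))⟩ x

theorem reiter_of_topAmenable' {Δ X : Type*} [Group Δ] [TopologicalSpace X] [MulAction Δ X]
    (h : TopAmenableAction Δ X) (x : X) (hx : ∀ δ : Δ, δ • x = x) : ReiterAmenable Δ := by
  obtain ⟨ν, hprob, -, hlim⟩ := h
  refine ⟨fun n => ν n x, fun n => hprob n x, fun δ => ?_⟩
  refine squeeze_zero (fun n => l1dist_nonneg') (fun n => ?_) (hlim δ)
  rw [l1dist_comm']
  have : l1dist (ν n x) (pushAct δ (ν n x)) = l1dist (ν n (δ • x)) (pushAct δ (ν n x)) := by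
    rw [hx δ]
  rw [this]
  exact le_ciSup ⟨2, Set.forall_mem_range.mpr fun y =>
    l1dist_le_two (hprob n _) (isProbFn_pushAct _ (hprob n y))⟩ x

/-- if a countable group `Γ` acts continuously and topologically amenably on a
compact Hausdorff space `X`, then the restricted action of any subgroup `Δ ≤ Γ` is
topologically amenable; in particular the stabilizer of every point of `X` is amenable. -/
theorem restricted_action_topologically_amenable
    {Γ X : Type*} [Group Γ] [Countable Γ]
    [TopologicalSpace X] [CompactSpace X] [T2Space X] [MulAction Γ X]
    (h : TopAmenableAction Γ X) (Δ : Subgroup Γ) :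
    TopAmenableAction ↥Δ X ∧ ∀ x : X, ReiterAmenable ↥(MulAction.stabilizer Γ x) := by
  refine ⟨topAmenable_subgroup' h Δ, fun x => ?_⟩
  refine reiter_of_topAmenable' (topAmenable_subgroup' h (MulAction.stabilizer Γ x)) x ?_
  intro δ
  exact δ.2
end
end

section
/- Let A and B be groups with B nontrivial, and let G = A ∗ B be their free product. For a ∈ A, let φ_a ∈ Aut(G) be the automorphism acting as conjugation by a on A and as the identity on B. Then the resulting homomorphism A → Out(G), a ↦ [φ_a], has kernel exactly the center Z(A). Consequently A/Z(A) embeds into Out(A ∗ B). -/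
set_option linter.unusedSectionVars false

noncomputable section

open Monoid CoprodI CoprodI.Word

section Words

variable {ι : Type*} {G : ι → Type*} [∀ i, Group (G i)]

/-- Inverse of a reduced word: reverse the list and invert each letter. -/
def myWordInv (w : Word G) : Word G where
  toList := (w.toList.map fun l => ⟨l.1, l.2⁻¹⟩).reverse
  ne_one := by
    intro l hl
    rw [List.mem_reverse, List.mem_map] at hl
    obtain ⟨l', hl', rfl⟩ := hl
    simpa using w.ne_one l' hl'
  chain_ne := by
    rw [List.isChain_reverse]
    refine (List.isChain_map _).2 ?_
    exact w.chain_ne.imp (by intro a b h; exact fun h' => h h'.symm)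

@[simp] lemma myWordInv_toList (w : Word G) :
    (myWordInv w).toList = (w.toList.map fun l => ⟨l.1, l.2⁻¹⟩).reverse := rfl

@[simp] lemma myWordInv_length (w : Word G) :
    (myWordInv w).toList.length = w.toList.length := by simp

lemma myWordInv_prod (w : Word G) : (myWordInv w).prod = w.prod⁻¹ := by
  unfold Word.prod
  rw [myWordInv_toList, List.map_reverse, List.prod_reverse_noncomm]
  congr 1
  rw [List.map_map, List.map_map]
  congr 1
  ext l
  simp

lemma myWordInv_myWordInv (w : Word G) : myWordInv (myWordInv w) = w := by
  apply Word.ext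
  simp [List.map_reverse, List.map_map, Function.comp_def]

end Words

section Words2

variable {ι : Type*} {G : ι → Type*} [∀ i, Group (G i)]
variable [DecidableEq ι] [∀ i, DecidableEq (G i)]

lemma word_eq_equiv {w : Word G} {g : CoprodI G} (h : w.prod = g) :
    w = Word.equiv g := by
  subst h
  exact (Word.equiv.apply_symm_apply w).symm

lemma equiv_mul (g h : CoprodI G) : Word.equiv (g * h) = g • Word.equiv h := by
  have : Word.equiv (g * h) = (g * h) • Word.empty := rfl
  rw [this, mul_smul]
  rfl

lemma equiv_inv (g : CoprodI G) : Word.equiv g⁻¹ = myWordInv (Word.equiv g) := by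
  refine (word_eq_equiv ?_).symm
  rw [myWordInv_prod]
  congr 1
  exact Word.equiv.symm_apply_apply g

lemma rcons_length {i : ι} (p : Word.Pair G i) :
    (Word.rcons p).toList.length ≤ p.tail.toList.length + 1 := by
  rw [Word.rcons]
  split
  · omega
  · simp [Word.cons]

lemma tail_length {i : ι} (w : Word G) :
    (Word.equivPair i w).tail.toList.length ≤ w.toList.length := by
  have h : Word.rcons (Word.equivPair i w) = w := (Word.equivPair i).symm_apply_apply w
  conv_rhs => rw [← h]
  rw [Word.rcons]
  split
  · omega
  · simp [Word.cons]

lemma smul_length {i : ι} (m : G i) (w : Word G) :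
    (of m • w).toList.length ≤ w.toList.length + 1 := by
  rw [Word.of_smul_def]
  exact le_trans (rcons_length _) (by simpa using tail_length (i := i) w)

end Words2

section Central

variable {ι : Type*} {G : ι → Type*} [∀ i, Group (G i)]
variable [DecidableEq ι] [∀ i, DecidableEq (G i)]

/-- If `g` commutes with every element of the factor `G j` (with `G j` nontrivial),
then `g` lies in the image of `G j`. -/
lemma centralizer_lemma {j : ι} [Nontrivial (G j)] {g : CoprodI G}
    (hc : ∀ y : G j, g * CoprodI.of y = CoprodI.of y * g) : ∃ c : G j, g = CoprodI.of c := by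
  set w := Word.equiv g with hw
  set P := Word.equivPair j w with hP
  have hgw : Word.rcons P = w := (Word.equivPair j).symm_apply_apply w
  have hg : g = CoprodI.of P.head * P.tail.prod := by
    have h1 : w.prod = g := Word.equiv.symm_apply_apply g
    rw [← h1, ← hgw, Word.prod_rcons]
  set t := P.tail with htdef
  set p := t.prod with hp
  have key : ∀ y : G j,
      p * CoprodI.of y = (CoprodI.of P.head)⁻¹ * CoprodI.of y * CoprodI.of P.head * p := by
    intro y
    have h2 : CoprodI.of P.head * p * CoprodI.of y
        = CoprodI.of y * (CoprodI.of P.head * p) := by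
      rw [← hg]; exact hc y
    calc p * CoprodI.of y
        = (CoprodI.of P.head)⁻¹ * (CoprodI.of P.head * p * CoprodI.of y) := by group
      _ = (CoprodI.of P.head)⁻¹ * (CoprodI.of y * (CoprodI.of P.head * p)) := by rw [h2]
      _ = (CoprodI.of P.head)⁻¹ * CoprodI.of y * CoprodI.of P.head * p := by group
  by_cases hte : t.toList = []
  · refine ⟨P.head, ?_⟩
    have hp1 : p = 1 := by
      rw [hp]; unfold Word.prod; rw [hte]; simp
    rw [hg, hp1, mul_one]
  · exfalso
    obtain ⟨y, hy⟩ := exists_ne (1 : G j)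
    set σy := P.head⁻¹ * y * P.head with hσ
    have hσy : σy ≠ 1 := by
      intro h
      apply hy
      rw [hσ, mul_assoc, inv_mul_eq_one] at h
      exact (right_eq_mul.mp h)
    have htp : t = Word.equiv p := word_eq_equiv hp.symm
    have hfst : t.fstIdx ≠ some j := P.fstIdx_ne
    have hE : CoprodI.of σy * p = p * CoprodI.of y := by
      rw [key y, hσ]
      simp [map_mul, mul_assoc]
    have hL : Word.equiv (CoprodI.of σy * p) = Word.cons σy t hfst hσy := by
      rw [equiv_mul, ← htp]
      exact Word.cons_eq_smul.symm
    set u := Word.equiv p⁻¹ with hu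
    have huinv : u = myWordInv t := by rw [hu, equiv_inv, ← htp]
    have hulen : u.toList.length = t.toList.length := by rw [huinv]; simp
    have hune : u.toList ≠ [] := by
      rw [huinv, myWordInv_toList]
      simpa using hte
    have hR : Word.equiv (p * CoprodI.of y) = myWordInv (Word.equiv (CoprodI.of y⁻¹ * p⁻¹)) := by
      have h5 : p * CoprodI.of y = (CoprodI.of y⁻¹ * p⁻¹)⁻¹ := by
        simp [mul_inv_rev, map_inv]
      rw [h5, equiv_inv]
    have hEq : Word.cons σy t hfst hσy = myWordInv (Word.equiv (CoprodI.of y⁻¹ * p⁻¹)) := by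
      rw [← hR, ← hE, hL]
    have hEq2 : Word.equiv (CoprodI.of y⁻¹ * p⁻¹) = myWordInv (Word.cons σy t hfst hσy) := by
      rw [hEq, myWordInv_myWordInv]
    by_cases hju : u.fstIdx = some j
    · -- length contradiction
      set Q := Word.equivPair j u with hQ
      have hrc : Word.rcons Q = u := (Word.equivPair j).symm_apply_apply u
      have hKne : Q.head ≠ 1 := by
        intro h1
        rw [Word.rcons, dif_pos h1] at hrc
        exact Q.fstIdx_ne (hrc ▸ hju)
      have hul : u.toList = ⟨j, Q.head⟩ :: Q.tail.toList := by
        conv_lhs => rw [← hrc]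
        rw [Word.rcons, dif_neg hKne]
        rfl
      have hL3 : Word.equiv (CoprodI.of y⁻¹ * p⁻¹)
          = Word.rcons ⟨y⁻¹ * Q.head, Q.tail, Q.fstIdx_ne⟩ := by
        rw [equiv_mul, ← hu, Word.of_smul_def]
      have len1 : (Word.equiv (CoprodI.of y⁻¹ * p⁻¹)).toList.length ≤ u.toList.length := by
        rw [hL3]
        refine le_trans (rcons_length _) ?_
        rw [hul]
        simp
      have len2 : (Word.equiv (CoprodI.of y⁻¹ * p⁻¹)).toList.length = u.toList.length + 1 := by
        rw [hEq2, myWordInv_length]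
        simp [Word.cons, hulen]
      omega
    · -- head contradiction
      have hL2 : Word.equiv (CoprodI.of y⁻¹ * p⁻¹)
          = Word.cons y⁻¹ u hju (inv_ne_one.2 hy) := by
        rw [equiv_mul, ← hu]
        exact Word.cons_eq_smul.symm
      have h3 := congrArg Word.toList (hL2.symm.trans hEq2)
      simp only [Word.cons, myWordInv_toList, List.map_cons, List.reverse_cons] at h3
      have h4 : u.toList = (t.toList.map fun l => (⟨l.1, l.2⁻¹⟩ : Σ i, G i)).reverse := by
        rw [huinv, myWordInv_toList]
      rw [← h4] at h3
      -- h3 : ⟨j, y⁻¹⟩ :: u.toList = u.toList ++ [⟨j, σy⁻¹⟩]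
      have h5 := congrArg List.head? h3
      rw [List.head?_cons, List.head?_append_of_ne_nil _ hune] at h5
      apply hju
      rw [Word.fstIdx, ← h5]
      rfl

end Central

section Main

variable {ι : Type*} {G : ι → Type*} [∀ i, Group (G i)]
variable [DecidableEq ι] [∀ i, DecidableEq (G i)]

lemma coprodI_main {i j : ι} (hij : i ≠ j) [Nontrivial (G j)] (a : G i) (g : CoprodI G)
    (hB : ∀ y : G j, g * CoprodI.of y = CoprodI.of y * g)
    (hA : ∀ x : G i, g * CoprodI.of x = CoprodI.of (a * x * a⁻¹) * g) :
    ∀ x : G i, a * x = x * a := by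
  obtain ⟨c, rfl⟩ := centralizer_lemma hB
  by_cases hc : c = 1
  · subst hc
    intro x
    have h1 := hA x
    simp only [map_one, one_mul, mul_one] at h1
    have h2 : x = a * x * a⁻¹ := CoprodI.of_injective (i := i) h1
    have h4 := congrArg (fun t => t * a) h2
    simpa [mul_assoc] using h4.symm
  · intro x
    by_cases hx : x = 1
    · subst hx; simp
    · exfalso
      set z := a * x * a⁻¹ with hz
      have h1 : CoprodI.of c * CoprodI.of x * (CoprodI.of c)⁻¹ = CoprodI.of z := by
        rw [hA x, mul_assoc, mul_inv_cancel, mul_one]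
      have hcond1 : (Word.empty : Word G).fstIdx ≠ some j := by
        simp [Word.fstIdx, Word.empty]
      set w1 := Word.cons (c⁻¹) Word.empty hcond1 (inv_ne_one.2 hc) with hw1def
      have hcond2 : w1.fstIdx ≠ some i := by
        rw [hw1def, Word.fstIdx_cons]
        simpa using hij.symm
      set w2 := Word.cons x w1 hcond2 hx with hw2def
      have hcond3 : w2.fstIdx ≠ some j := by
        rw [hw2def, Word.fstIdx_cons]
        simpa using hij
      set w3 := Word.cons c w2 hcond3 hc with hw3def
      have hprod : w3.prod = CoprodI.of z := by
        rw [hw3def, Word.prod_cons, hw2def, Word.prod_cons, hw1def, Word.prod_cons]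
        rw [Word.prod_empty, mul_one, map_inv, ← mul_assoc]
        exact h1
      have hword : w3 = Word.equiv (CoprodI.of z) := word_eq_equiv hprod
      have hlen : (Word.equiv (CoprodI.of z)).toList.length ≤ 1 := by
        have h6 : Word.equiv (CoprodI.of z) = CoprodI.of z • Word.empty := rfl
        rw [h6]
        refine le_trans (smul_length _ _) ?_
        simp [Word.empty]
      rw [← hword] at hlen
      simp [hw3def, hw2def, hw1def, Word.cons] at hlen

end Main

section Bridge

universe u v

/-- Two-element family of factors for `A ∗ B`. -/
@[reducible] def Fac (A : Type u) (B : Type v) : Bool → Type (max u v) :=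
  fun b => bif b then ULift.{v} A else ULift.{u} B

instance facGroup (A : Type u) (B : Type v) [Group A] [Group B] : ∀ b, Group (Fac A B b)
  | true => inferInstanceAs (Group (ULift A))
  | false => inferInstanceAs (Group (ULift B))

instance facNontrivial (A : Type u) (B : Type v) [Group A] [Group B] [Nontrivial B] :
    Nontrivial (Fac A B false) :=
  inferInstanceAs (Nontrivial (ULift B))

/-- Lifting a group to a higher universe, as a homomorphism. -/
def upHom (C : Type u) [Group C] : C →* ULift.{v} C := MulEquiv.ulift.symm.toMonoidHom

variable {A : Type u} {B : Type v} [Group A] [Group B]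

/-- The canonical homomorphism from the binary coproduct to the `Bool`-indexed coproduct. -/
def toI : Monoid.Coprod A B →* Monoid.CoprodI (Fac A B) :=
  Monoid.Coprod.lift
    ((Monoid.CoprodI.of (ι := Bool) (M := Fac A B) (i := true)).comp (upHom.{u, v} A))
    ((Monoid.CoprodI.of (ι := Bool) (M := Fac A B) (i := false)).comp (upHom.{v, u} B))

@[simp] lemma toI_inl (x : A) :
    toI (B := B) (Monoid.Coprod.inl x)
      = Monoid.CoprodI.of (ι := Bool) (M := Fac A B) (i := true) (ULift.up x) := by
  simp [toI, Monoid.Coprod.lift_apply_inl]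
  rfl

@[simp] lemma toI_inr (y : B) :
    toI (A := A) (Monoid.Coprod.inr y)
      = Monoid.CoprodI.of (ι := Bool) (M := Fac A B) (i := false) (ULift.up y) := by
  simp [toI, Monoid.Coprod.lift_apply_inr]
  rfl

end Bridge

/-- The automorphism of the free product `A ∗ B` acting as conjugation by `a` on the
factor `A` and as the identity on the factor `B` (as a monoid homomorphism). -/
def partialConj {A B : Type*} [Group A] [Group B] (a : A) :
    Monoid.Coprod A B →* Monoid.Coprod A B :=
  Monoid.Coprod.lift
    ((MulAut.conj (Monoid.Coprod.inl a)).toMonoidHom.comp Monoid.Coprod.inl)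
    Monoid.Coprod.inr


section End

variable {A B : Type*} [Group A] [Group B]

lemma partialConj_inl (a x : A) : partialConj (B := B) a (Monoid.Coprod.inl x)
    = Monoid.Coprod.inl a * Monoid.Coprod.inl x * (Monoid.Coprod.inl a)⁻¹ := by
  simp [partialConj, Monoid.Coprod.lift_apply_inl]

lemma partialConj_inr (a : A) (y : B) :
    partialConj (B := B) a (Monoid.Coprod.inr y) = Monoid.Coprod.inr y := by
  simp [partialConj, Monoid.Coprod.lift_apply_inr]

lemma partialConj_comp (a b : A) :
    (partialConj (B := B) a).comp (partialConj b) = partialConj (a * b) := by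
  apply Monoid.Coprod.hom_ext <;> ext x <;>
    simp [partialConj_inl, partialConj_inr, map_mul, map_inv, mul_assoc, mul_inv_rev]

lemma partialConj_center {a : A} (ha : a ∈ Subgroup.center A) :
    partialConj (B := B) a = MonoidHom.id _ := by
  apply Monoid.Coprod.hom_ext
  · ext x
    rw [MonoidHom.comp_apply, MonoidHom.comp_apply, partialConj_inl, MonoidHom.id_apply]
    rw [← map_inv, ← map_mul, ← map_mul]
    congr 1
    have h2 := Subgroup.mem_center_iff.mp ha x
    rw [← h2, mul_assoc, mul_inv_cancel, mul_one]
  · ext y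
    rw [MonoidHom.comp_apply, MonoidHom.comp_apply, partialConj_inr, MonoidHom.id_apply]

lemma inner_imp_center [Nontrivial B] (a : A)
    (h : ∃ g : Monoid.Coprod A B, ∀ x, partialConj (B := B) a x = g * x * g⁻¹) :
    a ∈ Subgroup.center A := by
  classical
  obtain ⟨g, hg⟩ := h
  letI : ∀ b, DecidableEq (Fac A B b) := fun b => Classical.decEq _
  set g' := toI (B := B) g with hg'
  have hB : ∀ y : Fac A B false, g' * Monoid.CoprodI.of y = Monoid.CoprodI.of y * g' := by
    intro y
    have h1 := hg (Monoid.Coprod.inr y.down)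
    rw [partialConj_inr] at h1
    have h3 : g * Monoid.Coprod.inr y.down = Monoid.Coprod.inr y.down * g := by
      have h4 := congrArg (· * g) h1
      simpa [mul_assoc] using h4.symm
    have h5 := congrArg (toI (B := B)) h3
    rw [map_mul, map_mul, toI_inr] at h5
    exact h5
  have hA : ∀ x : Fac A B true, g' * Monoid.CoprodI.of x
      = Monoid.CoprodI.of (ι := Bool) (M := Fac A B) (i := true)
          (ULift.up a * ULift.up x.down * (ULift.up a)⁻¹) * g' := by
    intro x
    have h1 := hg (Monoid.Coprod.inl x.down)
    rw [partialConj_inl] at h1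
    have h3 : g * Monoid.Coprod.inl x.down
        = Monoid.Coprod.inl a * Monoid.Coprod.inl x.down * (Monoid.Coprod.inl a)⁻¹ * g := by
      have h4 := congrArg (· * g) h1
      simpa [mul_assoc] using h4.symm
    have h5 := congrArg (toI (B := B)) h3
    simp only [map_mul, map_inv, toI_inl] at h5
    rw [map_mul, map_mul, map_inv]
    exact h5
  have hij : (true : Bool) ≠ false := by simp
  have hcomm := @coprodI_main Bool (Fac A B) _ instDecidableEqBool
      (fun b => Classical.decEq _) true false hij (facNontrivial A B) (ULift.up a) g' hB
      (fun x => hA x)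
  rw [Subgroup.mem_center_iff]
  intro x
  have h6 := hcomm (ULift.up x)
  exact (congrArg ULift.down h6).symm

end End

/-- for `G = A ∗ B` with `B` nontrivial, the homomorphism `A → Out(G)`,
`a ↦ [φ_a]`, has kernel exactly the center of `A`: `φ_a` is inner iff `a ∈ Z(A)`.
Consequently the induced map from `A` modulo its center is injective, i.e.
`A/Z(A)` embeds into `Out(A ∗ B)`. -/
theorem partialConj_inner_iff_center {A B : Type*} [Group A] [Group B] [Nontrivial B] :
    (∀ a : A,
      (∃ g : Monoid.Coprod A B, ∀ x : Monoid.Coprod A B,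
          partialConj (B := B) a x = g * x * g⁻¹)
        ↔ a ∈ Subgroup.center A) ∧
    (∀ a b : A,
      (∃ g : Monoid.Coprod A B, ∀ x : Monoid.Coprod A B,
          partialConj (B := B) a x = g * partialConj (B := B) b x * g⁻¹) →
        b⁻¹ * a ∈ Subgroup.center A) := by

  constructor
  · intro a
    constructor
    · exact inner_imp_center a
    · intro ha
      refine ⟨1, fun x => ?_⟩
      rw [partialConj_center ha]
      simp
  · rintro a b ⟨g, hg⟩
    refine inner_imp_center (B := B) (b⁻¹ * a) ⟨partialConj (B := B) b⁻¹ g, fun x => ?_⟩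
    have h1 := congrArg (partialConj (B := B) b⁻¹) (hg x)
    rw [map_mul, map_mul, map_inv] at h1
    have h2 := DFunLike.congr_fun (partialConj_comp (B := B) b⁻¹ a) x
    have h3 := DFunLike.congr_fun (partialConj_comp (B := B) b⁻¹ b) x
    rw [MonoidHom.comp_apply] at h2 h3
    rw [h2] at h1
    rw [h3, inv_mul_cancel] at h1
    have h4 : partialConj (B := B) (1 : A) x = x := by
      rw [partialConj_center (Subgroup.center A).one_mem]
      rfl
    rw [h4] at h1
    exact h1
end
end
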